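/- If the class of Ding injective right R-modules is closed under arbitrary direct sums, then R is right Noetherian. -/

import Mathlib

/-! Preamble: basic notions of relative homological algebra over a
(possibly noncommutative) ring.  Right `R`-modules are modeled as
(left) modules over the opposite ring `Rᵐᵒᵖ`. -/

open CategoryTheory Opposite

noncomputable section

/-- The Ext group `Ext^n(A, B)` in the category of left `S`-modules,
computed as a derived functor (of `ℤ`-modules). -/
def extGroup (S : Type) [Ring S] (n : ℕ) (A B : ModuleCat.{0} S) : Type :=
  ((_root_.Ext ℤ (ModuleCat.{0} S) n).obj (op A)).obj B

/-- Vanishing of the Ext group `Ext^n(A, B)`. -/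
def extVanish (S : Type) [Ring S] (n : ℕ) (A B : ModuleCat.{0} S) : Prop :=
  Subsingleton (extGroup S n A B)

/-- A module `E` is FP-injective if `Ext¹(F, E) = 0` for every finitely
presented module `F`. -/
def FPInjective (S : Type) [Ring S] (E : ModuleCat.{0} S) : Prop :=
  ∀ F : ModuleCat.{0} S, Module.FinitePresentation S F → extVanish S 1 F E

/-- `E` satisfies the Ext-criterion for FP-injective dimension `≤ n`:
`Ext^{n+1}(F, E) = 0` for every finitely presented `F`. -/
def fpInjDimLE (S : Type) [Ring S] (E : ModuleCat.{0} S) (n : ℕ) : Prop :=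
  ∀ F : ModuleCat.{0} S, Module.FinitePresentation S F → extVanish S (n + 1) F E

/-- `E` has FP-injective dimension exactly `n` : `n` is the least natural number
with `Ext^{n+1}(F, E) = 0` for all finitely presented `F`. -/
def fpInjDimEq (S : Type) [Ring S] (E : ModuleCat.{0} S) (n : ℕ) : Prop :=
  fpInjDimLE S E n ∧ ∀ m : ℕ, fpInjDimLE S E m → n ≤ m

/-- `E` has finite FP-injective dimension. -/
def fpInjDimFinite (S : Type) [Ring S] (E : ModuleCat.{0} S) : Prop :=
  ∃ n : ℕ, fpInjDimLE S E n

/-- A ring `S` is left coherent if every finitely generated left ideal is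
finitely presented (as a left `S`-module). -/
def LeftCoherent (S : Type) [Ring S] : Prop :=
  ∀ I : Submodule S S, I.FG → Module.FinitePresentation S I

/-- A ring `S` is right coherent if its opposite ring is left coherent. -/
def RightCoherent (S : Type) [Ring S] : Prop :=
  LeftCoherent Sᵐᵒᵖ

section BTensor

variable (R : Type) [Ring R]

/-- The subgroup of `A ⊗_ℤ B` by which one quotients to obtain the balanced
tensor product `A ⊗_R B` of a right `R`-module `A` and a left `R`-module `B`. -/
def btRel (A : Type) [AddCommGroup A] [Module Rᵐᵒᵖ A]
    (B : Type) [AddCommGroup B] [Module R B] :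
    Submodule ℤ (TensorProduct ℤ A B) :=
  Submodule.span ℤ
    {x | ∃ (a : A) (r : R) (b : B),
      x = (MulOpposite.op r • a) ⊗ₜ[ℤ] b - a ⊗ₜ[ℤ] (r • b)}

/-- The balanced tensor product `A ⊗_R B` of a right `R`-module `A` and a left
`R`-module `B`, defined as a quotient of `A ⊗_ℤ B`. -/
abbrev BTensor (A : Type) [AddCommGroup A] [Module Rᵐᵒᵖ A]
    (B : Type) [AddCommGroup B] [Module R B] : Type :=
  TensorProduct ℤ A B ⧸ btRel R A B

variable {A A' : Type} [AddCommGroup A] [Module Rᵐᵒᵖ A] [AddCommGroup A'] [Module Rᵐᵒᵖ A']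
variable {B B' : Type} [AddCommGroup B] [Module R B] [AddCommGroup B'] [Module R B']

/-- The map `A ⊗_R B → A ⊗_R B'` induced by a map `f : B → B'` of left
`R`-modules. -/
def BTensor.lmap (f : B →ₗ[R] B') (A : Type) [AddCommGroup A] [Module Rᵐᵒᵖ A] :
    BTensor R A B →ₗ[ℤ] BTensor R A B' :=
  Submodule.mapQ (btRel R A B) (btRel R A B')
    (TensorProduct.map LinearMap.id f.toAddMonoidHom.toIntLinearMap)
    (by
      rw [btRel, Submodule.span_le]
      rintro x ⟨a, r, b, rfl⟩
      simp only [SetLike.mem_coe, Submodule.mem_comap, map_sub, TensorProduct.map_tmul,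
        LinearMap.id_apply, AddMonoidHom.coe_toIntLinearMap, LinearMap.toAddMonoidHom_coe,
        map_smul]
      have key : (TensorProduct.map LinearMap.id f.toAddMonoidHom.toIntLinearMap)
          ((MulOpposite.op r • a) ⊗ₜ[ℤ] b - a ⊗ₜ[ℤ] (r • b)) =
            (MulOpposite.op r • a) ⊗ₜ[ℤ] f b - a ⊗ₜ[ℤ] (r • f b) := by simp
      exact Submodule.subset_span ⟨a, r, f b, key⟩)

/-- The map `A ⊗_R B → A' ⊗_R B` induced by a map `g : A → A'` of right
`R`-modules. -/
def BTensor.rmap (g : A →ₗ[Rᵐᵒᵖ] A') (B : Type) [AddCommGroup B] [Module R B] :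
    BTensor R A B →ₗ[ℤ] BTensor R A' B :=
  Submodule.mapQ (btRel R A B) (btRel R A' B)
    (TensorProduct.map g.toAddMonoidHom.toIntLinearMap LinearMap.id)
    (by
      rw [btRel, Submodule.span_le]
      rintro x ⟨a, r, b, rfl⟩
      simp only [SetLike.mem_coe, Submodule.mem_comap, map_sub, TensorProduct.map_tmul,
        LinearMap.id_apply, AddMonoidHom.coe_toIntLinearMap, LinearMap.toAddMonoidHom_coe,
        map_smul]
      have key : (TensorProduct.map g.toAddMonoidHom.toIntLinearMap LinearMap.id)
          ((MulOpposite.op r • a) ⊗ₜ[ℤ] b - a ⊗ₜ[ℤ] (r • b)) =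
            (MulOpposite.op r • g a) ⊗ₜ[ℤ] b - g a ⊗ₜ[ℤ] (r • b) := by simp
      exact Submodule.subset_span ⟨g a, r, b, key⟩)

/-- A right `R`-module `A` is flat if the functor `A ⊗_R —` preserves
injectivity of maps of left `R`-modules. -/
def FlatRight (A : ModuleCat.{0} Rᵐᵒᵖ) : Prop :=
  ∀ (B B' : ModuleCat.{0} R) (f : B →ₗ[R] B'),
    Function.Injective f → Function.Injective (BTensor.lmap R f A)

/-- A left `R`-module `B` is flat if the functor `— ⊗_R B` preserves
injectivity of maps of right `R`-modules. -/
def FlatLeft (B : ModuleCat.{0} R) : Prop :=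
  ∀ (A A' : ModuleCat.{0} Rᵐᵒᵖ) (g : A →ₗ[Rᵐᵒᵖ] A'),
    Function.Injective g → Function.Injective (BTensor.rmap R g B)

end BTensor

/-- A module `N` is Ding injective if there is a doubly infinite exact sequence
of injective modules, with `N` as one of the kernels, which stays exact after
applying `Hom(E, —)` for every FP-injective module `E`. -/
def DingInjective (S : Type) [Ring S] (N : ModuleCat.{0} S) : Prop :=
  ∃ (I : ℤ → ModuleCat.{0} S) (d : ∀ n : ℤ, I n →ₗ[S] I (n + 1)),
    (∀ n, Module.Injective S (I n)) ∧
    (∀ n, Function.Exact (d n) (d (n + 1))) ∧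
    Nonempty (N ≃ₗ[S] LinearMap.ker (d 0)) ∧
    (∀ E : ModuleCat.{0} S, FPInjective S E → ∀ n : ℤ,
      Function.Exact (fun g : E →ₗ[S] I n => (d n).comp g)
        (fun g : E →ₗ[S] I (n + 1) => (d (n + 1)).comp g))

/-- A right `R`-module `M` is Ding projective if there is a doubly infinite
exact sequence of projective right modules, with `M` as one of the kernels,
which stays exact after applying `Hom(—, F)` for every flat right module `F`. -/
def DingProjective (R : Type) [Ring R] (M : ModuleCat.{0} Rᵐᵒᵖ) : Prop :=
  ∃ (P : ℤ → ModuleCat.{0} Rᵐᵒᵖ) (d : ∀ n : ℤ, P n →ₗ[Rᵐᵒᵖ] P (n + 1)),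
    (∀ n, Module.Projective Rᵐᵒᵖ (P n)) ∧
    (∀ n, Function.Exact (d n) (d (n + 1))) ∧
    Nonempty (M ≃ₗ[Rᵐᵒᵖ] LinearMap.ker (d 0)) ∧
    (∀ F : ModuleCat.{0} Rᵐᵒᵖ, FlatRight R F → ∀ n : ℤ,
      Function.Exact (fun g : P (n + 1 + 1) →ₗ[Rᵐᵒᵖ] F => g.comp (d (n + 1)))
        (fun g : P (n + 1) →ₗ[Rᵐᵒᵖ] F => g.comp (d n)))

/-- A right `R`-module `M` is Ding flat if there is a doubly infinite exact
sequence of flat right modules, with `M` as one of the kernels, which stays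
exact after applying `— ⊗_R E` for every FP-injective left module `E`. -/
def DingFlat (R : Type) [Ring R] (M : ModuleCat.{0} Rᵐᵒᵖ) : Prop :=
  ∃ (F : ℤ → ModuleCat.{0} Rᵐᵒᵖ) (d : ∀ n : ℤ, F n →ₗ[Rᵐᵒᵖ] F (n + 1)),
    (∀ n, FlatRight R (F n)) ∧
    (∀ n, Function.Exact (d n) (d (n + 1))) ∧
    Nonempty (M ≃ₗ[Rᵐᵒᵖ] LinearMap.ker (d 0)) ∧
    (∀ E : ModuleCat.{0} R, FPInjective R E → ∀ n : ℤ,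
      Function.Exact (BTensor.rmap R (d n) E) (BTensor.rmap R (d (n + 1)) E))

/-- A left `R`-module `M` is Gorenstein flat if there is a doubly infinite
exact sequence of flat left modules, with `M` as one of the kernels, which
stays exact after applying `E ⊗_R —` for every injective right module `E`. -/
def GorensteinFlat (R : Type) [Ring R] (M : ModuleCat.{0} R) : Prop :=
  ∃ (F : ℤ → ModuleCat.{0} R) (d : ∀ n : ℤ, F n →ₗ[R] F (n + 1)),
    (∀ n, FlatLeft R (F n)) ∧
    (∀ n, Function.Exact (d n) (d (n + 1))) ∧
    Nonempty (M ≃ₗ[R] LinearMap.ker (d 0)) ∧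
    (∀ E : ModuleCat.{0} Rᵐᵒᵖ, Module.Injective Rᵐᵒᵖ E → ∀ n : ℤ,
      Function.Exact (BTensor.lmap R (d n) E) (BTensor.lmap R (d (n + 1)) E))

/-- A right `R`-module `M` has flat dimension `≤ n` : there is an exact
resolution `0 → F_n → ⋯ → F_0 → M → 0` by flat right modules (encoded as an
`ℕ`-indexed resolution which vanishes beyond degree `n`). -/
def flatDimLE (R : Type) [Ring R] (M : ModuleCat.{0} Rᵐᵒᵖ) (n : ℕ) : Prop :=
  ∃ (F : ℕ → ModuleCat.{0} Rᵐᵒᵖ) (d : ∀ k : ℕ, F (k + 1) →ₗ[Rᵐᵒᵖ] F k)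
    (ε : F 0 →ₗ[Rᵐᵒᵖ] M),
    (∀ k, FlatRight R (F k)) ∧
    Function.Surjective ε ∧
    Function.Exact (d 0) ε ∧
    (∀ k, Function.Exact (d (k + 1)) (d k)) ∧
    (∀ k, n < k → Subsingleton (F k))

/-- A right `R`-module has finite flat dimension. -/
def flatDimFinite (R : Type) [Ring R] (M : ModuleCat.{0} Rᵐᵒᵖ) : Prop :=
  ∃ n : ℕ, flatDimLE R M n

/-- A ring `R` is an `n`-FC ring if it is left and right coherent and has left
and right self FP-injective dimension equal to `n`. -/
def IsFCRing (R : Type) [Ring R] (n : ℕ) : Prop :=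
  LeftCoherent R ∧ RightCoherent R ∧
    fpInjDimEq R (ModuleCat.of R R) n ∧
    fpInjDimEq Rᵐᵒᵖ (ModuleCat.of Rᵐᵒᵖ Rᵐᵒᵖ) n

/-- A ring is Ding-Chen if it is an `n`-FC ring for some `n`. -/
def IsDingChen (R : Type) [Ring R] : Prop :=
  ∃ n : ℕ, IsFCRing R n

end


/-! ### Auxiliary lemmas -/

noncomputable section Aux

open DirectSum

lemma hom_exact_of_injective {S : Type} [Ring S]
    {P2 P1 P0 B : Type} [AddCommGroup P2] [AddCommGroup P1] [AddCommGroup P0] [AddCommGroup B]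
    [Module S P2] [Module S P1] [Module S P0] [Module S B]
    (hB : Module.Injective S B)
    (g : P2 →ₗ[S] P1) (f : P1 →ₗ[S] P0)
    (hex : ∀ y, f y = 0 ↔ y ∈ Set.range g)
    (φ : P1 →ₗ[S] B) (hφ : φ.comp g = 0) :
    ∃ ψ : P0 →ₗ[S] B, ψ.comp f = φ := by
  have hker : LinearMap.ker f ≤ LinearMap.ker φ := by
    intro y hy
    obtain ⟨x, rfl⟩ := (hex y).1 hy
    simpa using LinearMap.congr_fun hφ x
  let φbar : (P1 ⧸ LinearMap.ker f) →ₗ[S] B := (LinearMap.ker f).liftQ φ hker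
  let χ : LinearMap.range f →ₗ[S] B :=
    φbar.comp (f.quotKerEquivRange.symm : LinearMap.range f →ₗ[S] P1 ⧸ LinearMap.ker f)
  obtain ⟨ψ, hψ⟩ := hB.out (LinearMap.range f).subtype Subtype.coe_injective χ
  refine ⟨ψ, LinearMap.ext fun y => ?_⟩
  have h1 : ψ (f y) = χ ⟨f y, LinearMap.mem_range_self f y⟩ := hψ ⟨f y, LinearMap.mem_range_self f y⟩
  have h2 : f.quotKerEquivRange (Submodule.Quotient.mk y) = ⟨f y, LinearMap.mem_range_self f y⟩ :=
    Subtype.ext (f.quotKerEquivRange_apply_mk y)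
  have h3 : f.quotKerEquivRange.symm ⟨f y, LinearMap.mem_range_self f y⟩ =
      Submodule.Quotient.mk y := by rw [← h2]; exact f.quotKerEquivRange.symm_apply_apply _
  simp only [LinearMap.comp_apply]
  rw [h1]
  show φbar (f.quotKerEquivRange.symm ⟨f y, _⟩) = φ y
  rw [h3]
  rfl

lemma subsingleton_of_isZero {M : ModuleCat.{0} ℤ} (h : Limits.IsZero M) : Subsingleton M := by
  refine ⟨fun x y => ?_⟩
  have h1 : (𝟙 M : M ⟶ M) = 0 := h.eq_of_src _ _
  calc x = (𝟙 M : M ⟶ M) x := rfl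
    _ = (0 : M ⟶ M) x := by rw [h1]
    _ = (𝟙 M : M ⟶ M) y := by rw [h1]; rfl
    _ = y := rfl

lemma subsingleton_ext_of_injective (S : Type) [Ring S] (A B : ModuleCat.{0} S)
    (hB : Module.Injective S B) (n : ℕ) :
    Subsingleton (((_root_.Ext ℤ (ModuleCat.{0} S) (n + 1)).obj (op A)).obj B) := by
  obtain ⟨P⟩ : Nonempty (ProjectiveResolution A) := HasProjectiveResolution.out
  have iso := P.isoExt (R := ℤ) (n + 1) B
  have hz : Limits.IsZero ((P.complex.linearYonedaObj ℤ B).homology (n + 1)) := by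
    rw [← HomologicalComplex.exactAt_iff_isZero_homology]
    rw [HomologicalComplex.exactAt_iff' _ n (n + 1) (n + 2) (by simp) (by simp)]
    rw [ShortComplex.moduleCat_exact_iff]
    intro φ hφ
    have hφ' : (φ : P.complex.X (n + 1) ⟶ B).hom.comp (P.complex.d (n + 2) (n + 1)).hom = 0 :=
      congrArg ModuleCat.Hom.hom (show P.complex.d (n + 2) (n + 1) ≫ φ = 0 from hφ)
    have hexact := P.exact_succ n
    rw [ShortComplex.moduleCat_exact_iff_ker_sub_range] at hexact
    have hex : ∀ y, P.complex.d (n + 1) n y = 0 ↔ y ∈ Set.range (P.complex.d (n + 2) (n + 1)) := by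
      intro y
      constructor
      · intro hy
        exact hexact (by simpa [LinearMap.mem_ker] using hy)
      · rintro ⟨x, rfl⟩
        exact congrArg (fun k => ModuleCat.Hom.hom k x) (P.complex.d_comp_d (n + 2) (n + 1) n)
    obtain ⟨ψ, hψ⟩ := hom_exact_of_injective hB (P.complex.d (n + 2) (n + 1)).hom
      (P.complex.d (n + 1) n).hom hex φ.hom hφ'
    exact ⟨ModuleCat.ofHom ψ, ModuleCat.hom_ext hψ⟩
  exact subsingleton_of_isZero (hz.of_iso iso)

lemma Module.Injective.prodSelf {S : Type} [Ring S] {B : Type} [AddCommGroup B] [Module S B]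
    (hB : Module.Injective S B) : Module.Injective S (B × B) where
  out X Y _ _ _ _ f hf g := by
    obtain ⟨h1, hh1⟩ := hB.out f hf ((LinearMap.fst S B B).comp g)
    obtain ⟨h2, hh2⟩ := hB.out f hf ((LinearMap.snd S B B).comp g)
    exact ⟨h1.prod h2, fun x => Prod.ext (hh1 x) (hh2 x)⟩

lemma dingInjective_of_injective {S : Type} [Ring S] (N : ModuleCat.{0} S)
    (hN : Module.Injective S N) : DingInjective S N := by
  refine ⟨fun _ => ModuleCat.of S (N × N), fun _ => (LinearMap.snd S N N).prod 0,
    fun _ => hN.prodSelf, fun _ => ?_, ⟨?_⟩, fun E _ n => ?_⟩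
  · -- exactness
    intro y
    constructor
    · intro hy
      have h2 : y.2 = 0 := congrArg Prod.fst hy
      exact ⟨(0, y.1), Prod.ext rfl h2.symm⟩
    · rintro ⟨x, rfl⟩
      rfl
  · -- N ≃ ker
    refine
      { toFun := fun x => ⟨(x, 0), show ((LinearMap.snd S N N).prod 0) (x, 0) = 0 from rfl⟩
        map_add' := fun x y => Subtype.ext (show ((x + y, 0) : N × N) = (x, 0) + (y, 0) by
          rw [Prod.mk_add_mk, add_zero])
        map_smul' := fun c x => Subtype.ext (show ((c • x, 0) : N × N) = c • (x, 0) by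
          rw [Prod.smul_mk, smul_zero])
        invFun := fun p => (p.1 : N × N).1
        left_inv := fun x => rfl
        right_inv := fun p => ?_ }
    have hp : (p.1 : N × N).2 = 0 := congrArg Prod.fst p.2
    exact Subtype.ext (Prod.ext rfl hp.symm)
  · -- Hom exactness
    intro G
    constructor
    · intro hG
      have hG2 : ∀ x, (G x).2 = 0 := fun x => congrArg Prod.fst (LinearMap.congr_fun hG x)
      refine ⟨(0 : E →ₗ[S] N).prod ((LinearMap.fst S N N).comp G),
        LinearMap.ext fun x => Prod.ext rfl ?_⟩
      exact (hG2 x).symm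
    · rintro ⟨H, rfl⟩
      rfl

lemma injective_of_dingInjective_directSum {S : Type} [Ring S] {ι : Type}
    (M : ι → ModuleCat.{0} S) [DecidableEq ι] (hFP : ∀ i, FPInjective S (M i))
    (hD : DingInjective S (ModuleCat.of S (⨁ i, M i))) :
    Module.Injective S (⨁ i, (M i : Type)) := by
  obtain ⟨I, d, hinj, hex, ⟨e⟩, hhom⟩ := hD
  let Mc : ι → Type := fun i => M i
  let j := (LinearMap.ker (d 0)).subtype ∘ₗ e.toLinearMap
  have hj : ∀ y, (d 0) (j y) = 0 := fun y => LinearMap.mem_ker.1 (e y).2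
  have hlift : ∀ i : ι, ∃ gi : Mc i →ₗ[S] I (-1),
      (d (-1)).comp gi = j ∘ₗ DirectSum.lof S ι Mc i := by
    intro i
    have hji : (fun g : Mc i →ₗ[S] I (-1 + 1) => (d (-1 + 1)).comp g)
        (j ∘ₗ DirectSum.lof S ι Mc i) = 0 := by
      show (d 0).comp (j ∘ₗ DirectSum.lof S ι Mc i) = 0
      exact LinearMap.ext fun x => hj _
    exact (hhom (M i) (hFP i) (-1) _).mp hji
  choose g hg using hlift
  let G : (⨁ i, Mc i) →ₗ[S] I (-1) := DirectSum.toModule S ι (I (-1)) g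
  have hGj : (d (-1 : ℤ)).comp G = j := by
    refine DirectSum.linearMap_ext S fun i => ?_
    rw [LinearMap.comp_assoc]
    have hGl : G ∘ₗ DirectSum.lof S ι Mc i = g i := by
      refine LinearMap.ext fun x => ?_
      exact DirectSum.toModule_lof S i x
    rw [hGl, hg i]
  have hmem : ∀ c : I (-1), d (-1) c ∈ LinearMap.ker (d 0) := by
    intro c
    exact LinearMap.mem_ker.2 ((hex (-1) (d (-1) c)).mpr ⟨c, rfl⟩)
  let ρ := e.symm.toLinearMap ∘ₗ
      LinearMap.codRestrict (LinearMap.ker (d 0)) (d (-1)) hmem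
  have hretr : ∀ y, ρ (G y) = y := by
    intro y
    have h1 : d (-1) (G y) = j y := LinearMap.congr_fun hGj y
    have h2 : LinearMap.codRestrict (LinearMap.ker (d 0)) (d (-1)) hmem (G y) = e y := by
      apply Subtype.ext
      rw [LinearMap.codRestrict_apply]
      exact h1
    show e.symm (LinearMap.codRestrict (LinearMap.ker (d 0)) (d (-1)) hmem (G y)) = y
    rw [h2, LinearEquiv.symm_apply_apply]
  constructor
  intro X Y _ _ _ _ f hf gmap
  obtain ⟨h, hh⟩ := (hinj (-1)).out f hf (G ∘ₗ gmap)
  refine ⟨ρ ∘ₗ h, fun x => ?_⟩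
  show ρ (h (f x)) = gmap x
  rw [hh x]
  exact hretr (gmap x)


end Aux

open DirectSum in
/-- If the Ding injective right `R`-modules are closed under
arbitrary direct sums, then `R` is right Noetherian. -/
theorem statement4 (R : Type) [Ring R]
    (h : ∀ (ι : Type) (M : ι → ModuleCat.{0} Rᵐᵒᵖ),
      (∀ i, DingInjective Rᵐᵒᵖ (M i)) →
      DingInjective Rᵐᵒᵖ (ModuleCat.of Rᵐᵒᵖ (⨁ i, M i))) :
    IsNoetherianRing Rᵐᵒᵖ := by
  classical
  rw [isNoetherianRing_iff, ← monotone_stabilizes_iff_noetherian]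
  intro f
  -- injective modules containing the quotients Rᵐᵒᵖ ⧸ f n
  let Q : ℕ → ModuleCat.{0} Rᵐᵒᵖ := fun n => ModuleCat.of Rᵐᵒᵖ (Rᵐᵒᵖ ⧸ f n)
  let M : ℕ → ModuleCat.{0} Rᵐᵒᵖ := fun n => Injective.under (Q n)
  have hMcatinj : ∀ n, CategoryTheory.Injective (ModuleCat.of Rᵐᵒᵖ (M n)) := by
    intro n
    exact inferInstanceAs (CategoryTheory.Injective (Injective.under (Q n)))
  have hMinj : ∀ n, Module.Injective Rᵐᵒᵖ (M n) := fun n =>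
    Module.injective_module_of_injective_object Rᵐᵒᵖ (M n) (inj := hMcatinj n)
  have hFP : ∀ n, FPInjective Rᵐᵒᵖ (M n) := fun n F _ =>
    subsingleton_ext_of_injective Rᵐᵒᵖ F (M n) (hMinj n) 0
  have hDing : ∀ n, DingInjective Rᵐᵒᵖ (M n) := fun n =>
    dingInjective_of_injective (M n) (hMinj n)
  have hInj : Module.Injective Rᵐᵒᵖ (⨁ n, (M n : Type)) :=
    injective_of_dingInjective_directSum M hFP (h ℕ M hDing)
  -- the union of the chain
  let J : Submodule Rᵐᵒᵖ Rᵐᵒᵖ := ⨆ n, f n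
  have hmemJ : ∀ x : J, ∃ m, (x : Rᵐᵒᵖ) ∈ f m := by
    intro x
    exact (Submodule.mem_iSup_of_directed f (f.monotone.directed_le)).1 x.2
  let ι : ∀ n, (Q n : Type) →ₗ[Rᵐᵒᵖ] M n := fun n => (Injective.ι (Q n) : Q n ⟶ M n).hom
  have hιinj : ∀ n, Function.Injective (ι n) := fun n =>
    (ModuleCat.mono_iff_injective (Injective.ι (Q n))).1 inferInstance
  let u : ∀ n, J →ₗ[Rᵐᵒᵖ] M n := fun n => (ι n) ∘ₗ ((f n).mkQ ∘ₗ J.subtype)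
  have hu0 : ∀ (n) (x : J), (x : Rᵐᵒᵖ) ∈ f n → u n x = 0 := by
    intro n x hx
    have : (f n).mkQ (x : Rᵐᵒᵖ) = 0 := by
      rw [Submodule.mkQ_apply, Submodule.Quotient.mk_eq_zero]
      exact hx
    show ι n ((f n).mkQ (x : Rᵐᵒᵖ)) = 0
    rw [this, map_zero]
  -- the map J → ⨁ M n
  let psiFun : J → ⨁ n, (M n : Type) := fun x =>
    DFinsupp.mk (Finset.range ((hmemJ x).choose + 1)) (fun n => u n x)
  have key : ∀ (x : J) (n : ℕ), psiFun x n = u n x := by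
    intro x n
    have hmk : psiFun x n =
        if H : n ∈ Finset.range ((hmemJ x).choose + 1) then u n x else 0 :=
      DFinsupp.mk_apply
    by_cases hn : n ∈ Finset.range ((hmemJ x).choose + 1)
    · rw [hmk, dif_pos hn]
    · rw [hmk, dif_neg hn]
      refine (hu0 n x ?_).symm
      have : (hmemJ x).choose ≤ n := by
        simp only [Finset.mem_range, not_lt] at hn
        omega
      exact f.monotone this (hmemJ x).choose_spec
  let ψ : J →ₗ[Rᵐᵒᵖ] ⨁ n, (M n : Type) :=
    { toFun := psiFun
      map_add' := fun x y => DFinsupp.ext fun n => by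
        rw [DFinsupp.add_apply, key, key, key, map_add]
      map_smul' := fun c x => DFinsupp.ext fun n => by
        rw [RingHom.id_apply, DFinsupp.smul_apply, key, key, map_smul] }
  obtain ⟨Ψ, hΨ⟩ := hInj.out J.subtype (Submodule.injective_subtype J) ψ
  -- beyond the support of Ψ 1, the chain swallows J
  let N₀ : ℕ := (Ψ 1).support.sup id + 1
  have hz : ∀ n, N₀ ≤ n → Ψ 1 n = 0 := by
    intro n hn
    by_contra hne
    have hmem : n ∈ (Ψ 1).support := DFinsupp.mem_support_iff.2 hne
    have : n ≤ (Ψ 1).support.sup id := Finset.le_sup (f := id) hmem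
    omega
  have hJle : ∀ n, N₀ ≤ n → J ≤ f n := by
    intro n hn x hx
    have hψx : ψ ⟨x, hx⟩ n = 0 := by
      have h1 : Ψ (J.subtype ⟨x, hx⟩) = ψ ⟨x, hx⟩ := hΨ ⟨x, hx⟩
      have h2 : Ψ x = x • Ψ 1 := by
        conv_lhs => rw [show (x : Rᵐᵒᵖ) = x • (1 : Rᵐᵒᵖ) by rw [smul_eq_mul, mul_one]]
        rw [map_smul]
      have h3 : (x • Ψ 1) n = 0 := by
        rw [DFinsupp.smul_apply, hz n hn, smul_zero]
      rw [← h1]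
      show Ψ x n = 0
      rw [h2, h3]
    have : u n ⟨x, hx⟩ = 0 := by rw [← key ⟨x, hx⟩ n]; exact hψx
    have hq : (f n).mkQ x = 0 := by
      apply hιinj n
      rw [map_zero]
      exact this
    rwa [Submodule.mkQ_apply, Submodule.Quotient.mk_eq_zero] at hq
  refine ⟨N₀, fun m hm => ?_⟩
  exact le_antisymm (f.monotone hm)
    (le_trans (le_iSup (fun n => f n) m) (hJle N₀ le_rfl))
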